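/- Suppose p* ∈ (0,1] satisfies p* = exp(-λcr²η/(1 + Aηp*) - θr^α/ρ) and (1 + Aηp*)² - λcr²Aη²p* > 0. Then ∂p*/∂λ = -cr²ηp*(1+Aηp*)/((1+Aηp*)² - λcr²Aη²p*) < 0, i.e., the steady-state transmission success probability is strictly decreasing in the deployment density λ. -/

import Mathlib

/-- implicit differentiation of the fixed-point equation
p*(λ) = exp(-λcr²η/(1+Aηp*) - θr^α/ρ) with respect to the density λ:
the derivative equals -cr²ηp*(1+Aηp*)/((1+Aηp*)² - λcr²Aη²p*) and is negative. -/
theorem stmt_5 (lam c r η θ α ρ A : ℝ)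
    (hlam : 0 < lam) (hc : 0 < c) (hr : 0 < r) (hη : 0 < η) (hθ : 0 < θ)
    (hα : 0 < α) (hρ : 0 < ρ) (hA : 0 ≤ A)
    (P : ℝ → ℝ) (hmem : P lam ∈ Set.Ioc (0:ℝ) 1)
    (hfix : ∀ l : ℝ,
      P l = Real.exp (-(l * c * r ^ 2 * η) / (1 + A * η * P l) - θ * r ^ α / ρ))
    (hstab : 0 < (1 + A * η * P lam) ^ 2 - lam * c * r ^ 2 * A * η ^ 2 * P lam)
    (d : ℝ) (hd : HasDerivAt P d lam) :
    d = -(c * r ^ 2 * η * P lam * (1 + A * η * P lam)) /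
        ((1 + A * η * P lam) ^ 2 - lam * c * r ^ 2 * A * η ^ 2 * P lam) ∧
      d < 0 := by
  obtain ⟨hp0, hp1⟩ := hmem
  have hQ : 0 < 1 + A * η * P lam := by
    nlinarith [mul_nonneg (mul_nonneg hA hη.le) hp0.le]
  -- derivative of numerator
  have hu : HasDerivAt (fun l : ℝ => -(l * c * r ^ 2 * η)) (-(c * r ^ 2 * η)) lam := by
    have h1 : HasDerivAt (fun l : ℝ => l * c * r ^ 2 * η) (1 * c * r ^ 2 * η) lam :=
      (((hasDerivAt_id lam).mul_const c).mul_const (r ^ 2)).mul_const η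
    simpa using h1.fun_neg
  -- derivative of denominator
  have hv : HasDerivAt (fun l : ℝ => 1 + A * η * P l) (A * η * d) lam := by
    simpa using (hd.const_mul (A * η)).const_add 1
  have hg : HasDerivAt
      (fun l : ℝ => -(l * c * r ^ 2 * η) / (1 + A * η * P l) - θ * r ^ α / ρ)
      ((-(c * r ^ 2 * η) * (1 + A * η * P lam) -
        -(lam * c * r ^ 2 * η) * (A * η * d)) / (1 + A * η * P lam) ^ 2) lam :=
    (hu.div hv hQ.ne').sub_const _
  have hexp : HasDerivAt
      (fun l : ℝ => Real.exp (-(l * c * r ^ 2 * η) / (1 + A * η * P l) - θ * r ^ α / ρ))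
      (Real.exp (-(lam * c * r ^ 2 * η) / (1 + A * η * P lam) - θ * r ^ α / ρ) *
        ((-(c * r ^ 2 * η) * (1 + A * η * P lam) -
          -(lam * c * r ^ 2 * η) * (A * η * d)) / (1 + A * η * P lam) ^ 2)) lam :=
    hg.exp
  have hd' : HasDerivAt P
      (Real.exp (-(lam * c * r ^ 2 * η) / (1 + A * η * P lam) - θ * r ^ α / ρ) *
        ((-(c * r ^ 2 * η) * (1 + A * η * P lam) -
          -(lam * c * r ^ 2 * η) * (A * η * d)) / (1 + A * η * P lam) ^ 2)) lam :=
    hexp.congr_of_eventuallyEq (Filter.Eventually.of_forall hfix)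
  have key := hd.unique hd'
  rw [← hfix lam] at key
  -- key : d = P lam * (...)
  have hQ2 : ((1 + A * η * P lam) ^ 2) ≠ 0 := by positivity
  have heq : d * ((1 + A * η * P lam) ^ 2 - lam * c * r ^ 2 * A * η ^ 2 * P lam) =
      -(c * r ^ 2 * η * P lam * (1 + A * η * P lam)) := by
    field_simp at key
    nlinarith [key]
  have hdval : d = -(c * r ^ 2 * η * P lam * (1 + A * η * P lam)) /
      ((1 + A * η * P lam) ^ 2 - lam * c * r ^ 2 * A * η ^ 2 * P lam) := by
    rw [eq_div_iff hstab.ne']; exact heq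
  refine ⟨hdval, ?_⟩
  rw [hdval]
  apply div_neg_of_neg_of_pos _ hstab
  have : 0 < c * r ^ 2 * η * P lam * (1 + A * η * P lam) := by positivity
  linarith
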